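/- Assume (q), let f ∈ C¹[0,1] with f(0)=0, h := f′, let c* be the threshold for problem (P_c⁰⁰), let z* be the solution of (P_{c*}⁰⁰), and for c ∈ ℝ let ζ_c be the unique function in C⁰[0,1] ∩ C¹(0,1) with ζ̇_c(φ) = h(φ) − c − q(φ)/ζ_c(φ) on (0,1), ζ_c < 0 on (0,1), ζ_c(1) = 0. Then: (i) if c₂ > c₁ then ζ_{c₂}(φ) > ζ_{c₁}(φ) for all φ ∈ (0,1); (ii) for every φ ∈ [0,1], ζ_c(φ) → z*(φ) as c → c*. -/

import Mathlib

open Set Filter Topology MeasureTheory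

noncomputable section

/-- `z` is a solution of the singular first-order ODE ż(φ) = h(φ) − c − q(φ)/z(φ)
on (0,1), negative on (0,1), and continuous on [0,1]. -/
def SolODE (h q : ℝ → ℝ) (c : ℝ) (z : ℝ → ℝ) : Prop :=
  ContinuousOn z (Icc 0 1) ∧
  (∀ φ ∈ Ioo (0:ℝ) 1, HasDerivAt z (h φ - c - q φ / z φ) φ) ∧
  (∀ φ ∈ Ioo (0:ℝ) 1, z φ < 0)

/-- Problem (P_c): the singular ODE with the left boundary condition z(0) = 0. -/
def PC (h q : ℝ → ℝ) (c : ℝ) (z : ℝ → ℝ) : Prop :=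
  SolODE h q c z ∧ z 0 = 0

/-- Problem (P_c⁰⁰): the singular ODE with the two boundary conditions z(0) = z(1) = 0. -/
def PC00 (h q : ℝ → ℝ) (c : ℝ) (z : ℝ → ℝ) : Prop :=
  PC h q c z ∧ z 1 = 0

/-- Derivative of the difference of two solutions. -/
private lemma diff_deriv {h q : ℝ → ℝ} {c₁ c₂ : ℝ} {z₁ z₂ : ℝ → ℝ}
    (h₁ : SolODE h q c₁ z₁) (h₂ : SolODE h q c₂ z₂) {φ : ℝ} (hφ : φ ∈ Ioo (0:ℝ) 1) :
    HasDerivAt (fun x => z₂ x - z₁ x)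
      ((c₁ - c₂) + q φ / (z₁ φ * z₂ φ) * (z₂ φ - z₁ φ)) φ := by
  have hz1 : z₁ φ ≠ 0 := (h₁.2.2 φ hφ).ne
  have hz2 : z₂ φ ≠ 0 := (h₂.2.2 φ hφ).ne
  have H : HasDerivAt (fun x => z₂ x - z₁ x) (h φ - c₂ - q φ / z₂ φ - (h φ - c₁ - q φ / z₁ φ)) φ :=
    (h₂.2.1 φ hφ).sub (h₁.2.1 φ hφ)
  convert H using 1
  field_simp
  ring

/-- If the difference `z₂ - z₁` is negative somewhere in `(0,1)` with `c₁ < c₂`,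
we get a contradiction. -/
private lemma no_neg {h q : ℝ → ℝ} {c₁ c₂ : ℝ} {z₁ z₂ : ℝ → ℝ}
    (hq_pos : ∀ φ ∈ Ioo (0:ℝ) 1, 0 < q φ)
    (h₁ : SolODE h q c₁ z₁) (h₁1 : z₁ 1 = 0)
    (h₂ : SolODE h q c₂ z₂) (h₂1 : z₂ 1 = 0)
    (hc : c₁ < c₂) {φ₁ : ℝ} (hφ₁ : φ₁ ∈ Ioo (0:ℝ) 1)
    (hneg : z₂ φ₁ - z₁ φ₁ < 0) : False := by
  set d : ℝ → ℝ := fun x => z₂ x - z₁ x with hd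
  have hdcont : ContinuousOn d (Icc 0 1) := (h₂.1).sub (h₁.1)
  have hd1 : d 1 = 0 := by simp [hd, h₁1, h₂1]
  set T := {x ∈ Icc φ₁ 1 | d x = 0} with hT
  have hTclosed : IsClosed T := by
    have hTeq : T = Icc φ₁ 1 ∩ d ⁻¹' {0} := by
      ext x; simp [hT, Set.mem_sep_iff]
    rw [hTeq]
    exact ContinuousOn.preimage_isClosed_of_isClosed
      (hdcont.mono (Icc_subset_Icc hφ₁.1.le le_rfl)) isClosed_Icc isClosed_singleton
  have hT1 : (1:ℝ) ∈ T := ⟨⟨hφ₁.2.le, le_rfl⟩, hd1⟩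
  have hTbdd : BddBelow T := ⟨φ₁, fun x hx => hx.1.1⟩
  set φ₂ := sInf T with hφ₂def
  have hφ₂T : φ₂ ∈ T := hTclosed.csInf_mem ⟨1, hT1⟩ hTbdd
  have hφ₂le : ∀ x ∈ T, φ₂ ≤ x := fun x hx => csInf_le hTbdd hx
  have hφ₁φ₂ : φ₁ < φ₂ := by
    rcases lt_or_eq_of_le hφ₂T.1.1 with hlt | heq
    · exact hlt
    · exfalso; rw [← heq] at hφ₂T; exact hneg.ne hφ₂T.2
  -- d is negative on [φ₁, φ₂)
  have hdneg : ∀ y ∈ Ico φ₁ φ₂, d y < 0 := by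
    intro y hy
    by_contra hge
    push_neg at hge
    have hsub : Icc φ₁ y ⊆ Icc 0 1 :=
      Icc_subset_Icc hφ₁.1.le ((hy.2.le).trans hφ₂T.1.2)
    have hIVT := intermediate_value_Icc hy.1 (hdcont.mono hsub)
    have h0mem : (0:ℝ) ∈ Icc (d φ₁) (d y) := ⟨hneg.le, hge⟩
    obtain ⟨x, hx, hdx⟩ := hIVT h0mem
    have hxT : x ∈ T := ⟨⟨hx.1, hx.2.trans ((hy.2.le).trans hφ₂T.1.2)⟩, hdx⟩
    have := hφ₂le x hxT
    exact absurd (hx.2.trans_lt hy.2) (not_lt.2 this)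
  -- d is strictly decreasing on [φ₁, φ₂]
  have hanti : StrictAntiOn d (Icc φ₁ φ₂) := by
    apply strictAntiOn_of_deriv_neg (convex_Icc _ _)
      (hdcont.mono (Icc_subset_Icc hφ₁.1.le hφ₂T.1.2))
    intro x hx
    rw [interior_Icc] at hx
    have hxI : x ∈ Ioo (0:ℝ) 1 := ⟨hφ₁.1.trans hx.1, hx.2.trans_le hφ₂T.1.2⟩
    have hder := diff_deriv h₁ h₂ hxI
    rw [hder.deriv]
    have hdx : d x < 0 := hdneg x ⟨hx.1.le, hx.2⟩
    have hz1 := h₁.2.2 x hxI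
    have hz2 := h₂.2.2 x hxI
    have hqx := hq_pos x hxI
    have hterm : q x / (z₁ x * z₂ x) * (z₂ x - z₁ x) < 0 :=
      mul_neg_of_pos_of_neg (div_pos hqx (mul_pos_of_neg_of_neg hz1 hz2)) hdx
    have hdx' : z₂ x - z₁ x < 0 := hdx
    linarith
  have h1 : d φ₂ < d φ₁ :=
    hanti ⟨le_rfl, hφ₁φ₂.le⟩ ⟨hφ₁φ₂.le, le_rfl⟩ hφ₁φ₂
  rw [hφ₂T.2] at h1
  have h1' : (0:ℝ) < z₂ φ₁ - z₁ φ₁ := h1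
  linarith

/-- Strict comparison: if `c₁ < c₂`, then `z₁ < z₂` on `(0,1)`. -/
private lemma comp_lt {h q : ℝ → ℝ} {c₁ c₂ : ℝ} {z₁ z₂ : ℝ → ℝ}
    (hq_pos : ∀ φ ∈ Ioo (0:ℝ) 1, 0 < q φ)
    (h₁ : SolODE h q c₁ z₁) (h₁1 : z₁ 1 = 0)
    (h₂ : SolODE h q c₂ z₂) (h₂1 : z₂ 1 = 0)
    (hc : c₁ < c₂) : ∀ φ ∈ Ioo (0:ℝ) 1, z₁ φ < z₂ φ := by
  intro φ₀ hφ₀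
  by_contra hge
  push_neg at hge
  rcases lt_or_eq_of_le hge with hlt | heq
  · exact no_neg hq_pos h₁ h₁1 h₂ h₂1 hc hφ₀ (by linarith)
  -- z₂ φ₀ = z₁ φ₀; the derivative of the difference at φ₀ is c₁ - c₂ < 0
  · have heq0 : z₂ φ₀ - z₁ φ₀ = 0 := by linarith [heq]
    have hder : HasDerivAt (fun x => z₂ x - z₁ x) (c₁ - c₂) φ₀ := by
      have := diff_deriv h₁ h₂ hφ₀
      rw [heq0, mul_zero, add_zero] at this
      exact this
    have hslope := hasDerivAt_iff_tendsto_slope.mp hder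
    have hslope' : Tendsto (slope (fun x => z₂ x - z₁ x) φ₀) (𝓝[>] φ₀) (𝓝 (c₁ - c₂)) :=
      hslope.mono_left (nhdsWithin_mono _ (fun y hy => hy.ne'))
    have hlt : ∀ᶠ y in 𝓝[>] φ₀, slope (fun x => z₂ x - z₁ x) φ₀ y < 0 :=
      hslope'.eventually_lt_const (by linarith)
    have hmem : Ioo φ₀ 1 ∈ 𝓝[>] φ₀ := Ioo_mem_nhdsGT_of_mem ⟨le_rfl, hφ₀.2⟩
    obtain ⟨y, hsy, hy⟩ := (hlt.and (eventually_of_mem hmem (fun y hy => hy))).exists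
    rw [slope_def_field] at hsy
    have hpos : (0:ℝ) < y - φ₀ := sub_pos.2 hy.1
    have hdy : (z₂ y - z₁ y) - (z₂ φ₀ - z₁ φ₀) < 0 := by
      have := mul_neg_of_neg_of_pos hsy hpos
      rwa [div_mul_cancel₀ _ hpos.ne'] at this
    rw [heq0, sub_zero] at hdy
    exact no_neg hq_pos h₁ h₁1 h₂ h₂1 hc
      (⟨hφ₀.1.trans hy.1, hy.2⟩ : y ∈ Ioo (0:ℝ) 1) hdy

/-- Quantitative comparison: `0 ≤ z₂ − z₁ ≤ c₂ − c₁` on `[0,1]`. -/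
private lemma comp_bounds {h q : ℝ → ℝ} {c₁ c₂ : ℝ} {z₁ z₂ : ℝ → ℝ}
    (hq_pos : ∀ φ ∈ Ioo (0:ℝ) 1, 0 < q φ)
    (h₁ : SolODE h q c₁ z₁) (h₁1 : z₁ 1 = 0)
    (h₂ : SolODE h q c₂ z₂) (h₂1 : z₂ 1 = 0)
    (hc : c₁ < c₂) :
    ∀ φ ∈ Icc (0:ℝ) 1, 0 ≤ z₂ φ - z₁ φ ∧ z₂ φ - z₁ φ ≤ c₂ - c₁ := by
  have hlt := comp_lt hq_pos h₁ h₁1 h₂ h₂1 hc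
  set d : ℝ → ℝ := fun x => z₂ x - z₁ x with hd
  have hdcont : ContinuousOn d (Icc 0 1) := (h₂.1).sub (h₁.1)
  -- g = d + (c₂ - c₁) x is monotone on [0,1]
  set g : ℝ → ℝ := fun x => d x + (c₂ - c₁) * x with hg
  have hgder : ∀ x ∈ Ioo (0:ℝ) 1,
      HasDerivAt g (q x / (z₁ x * z₂ x) * (z₂ x - z₁ x)) x := by
    intro x hx
    have h1 := (diff_deriv h₁ h₂ hx).add
      (((hasDerivAt_id x).const_mul (c₂ - c₁)))
    have : (c₁ - c₂) + q x / (z₁ x * z₂ x) * (z₂ x - z₁ x) + (c₂ - c₁) * 1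
        = q x / (z₁ x * z₂ x) * (z₂ x - z₁ x) := by ring
    rw [this] at h1
    exact h1
  have hgmono : MonotoneOn g (Icc 0 1) := by
    apply monotoneOn_of_deriv_nonneg (convex_Icc 0 1)
    · exact hdcont.add ((continuous_const.mul continuous_id).continuousOn)
    · intro x hx
      rw [interior_Icc] at hx
      exact ((hgder x hx).differentiableAt).differentiableWithinAt
    · intro x hx
      rw [interior_Icc] at hx
      rw [(hgder x hx).deriv]
      have hz1 := h₁.2.2 x hx
      have hz2 := h₂.2.2 x hx
      have hqx := hq_pos x hx
      have hdx : 0 ≤ z₂ x - z₁ x := by linarith [hlt x hx]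
      exact mul_nonneg (div_pos hqx (mul_pos_of_neg_of_neg hz1 hz2)).le hdx
  -- lower bound at 0 by continuity
  have hd0 : 0 ≤ d 0 := by
    have hcw : ContinuousWithinAt d (Icc 0 1) 0 := hdcont 0 ⟨le_rfl, zero_le_one⟩
    have ht : Tendsto d (𝓝[Ioo (0:ℝ) 1] 0) (𝓝 (d 0)) :=
      hcw.tendsto.mono_left (nhdsWithin_mono _ Ioo_subset_Icc_self)
    have hne : (𝓝[Ioo (0:ℝ) 1] (0:ℝ)).NeBot := by
      apply mem_closure_iff_nhdsWithin_neBot.mp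
      rw [closure_Ioo (zero_ne_one)]
      exact ⟨le_rfl, zero_le_one⟩
    exact ge_of_tendsto ht (eventually_nhdsWithin_of_forall
      (fun x hx => by have := hlt x hx; simp only [hd]; linarith))
  intro φ hφ
  constructor
  · -- lower bound
    rcases eq_or_lt_of_le hφ.1 with h0 | h0
    · rw [← h0]; exact hd0
    · rcases eq_or_lt_of_le hφ.2 with h1' | h1'
      · rw [h1', h₁1, h₂1]; norm_num
      · have := hlt φ ⟨h0, h1'⟩; linarith
  · -- upper bound via monotonicity of g
    have hgle : g φ ≤ g 1 := hgmono hφ ⟨zero_le_one, le_rfl⟩ hφ.2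
    have hg1 : g 1 = c₂ - c₁ := by simp [hg, hd, h₁1, h₂1]
    rw [hg1] at hgle
    have hφ0 : 0 ≤ (c₂ - c₁) * φ := mul_nonneg (by linarith) hφ.1
    simp only [hg, hd] at hgle
    linarith

/-- monotonicity in c of the family ζ_c and convergence
ζ_c → z* pointwise on [0,1] as c → c*. -/
theorem stmt_12 (f h q : ℝ → ℝ) (cstar : ℝ) (zstar : ℝ → ℝ) (ζ : ℝ → ℝ → ℝ)
    (hq_cont : ContinuousOn q (Icc 0 1))
    (hq_pos : ∀ φ ∈ Ioo (0:ℝ) 1, 0 < q φ)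
    (hq0 : q 0 = 0) (hq1 : q 1 = 0)
    (hq_lim : ∃ L : ℝ, ∀ᶠ φ in 𝓝[>] (0:ℝ), q φ / φ ≤ L)
    (hf0 : f 0 = 0)
    (hf' : ∀ x ∈ Icc (0:ℝ) 1, HasDerivWithinAt f (h x) (Icc 0 1) x)
    (hh_cont : ContinuousOn h (Icc 0 1))
    (hcstar : ∀ c : ℝ, (∃ z : ℝ → ℝ, PC00 h q c z) ↔ cstar ≤ c)
    (hzstar : PC00 h q cstar zstar)
    (hζ : ∀ c : ℝ, SolODE h q c (ζ c) ∧ ζ c 1 = 0)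
    (hζuniq : ∀ c : ℝ, ∀ w : ℝ → ℝ, SolODE h q c w ∧ w 1 = 0 → EqOn w (ζ c) (Icc 0 1)) :
    (∀ c₁ c₂ : ℝ, c₁ < c₂ → ∀ φ ∈ Ioo (0:ℝ) 1, ζ c₁ φ < ζ c₂ φ) ∧
    (∀ φ ∈ Icc (0:ℝ) 1, Tendsto (fun c => ζ c φ) (𝓝 cstar) (𝓝 (zstar φ))) := by
  constructor
  · intro c₁ c₂ hc
    exact comp_lt hq_pos (hζ c₁).1 (hζ c₁).2 (hζ c₂).1 (hζ c₂).2 hc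
  · -- quantitative bound
    have hbnd : ∀ c : ℝ, ∀ φ ∈ Icc (0:ℝ) 1, |ζ c φ - ζ cstar φ| ≤ |c - cstar| := by
      intro c φ hφ
      rcases lt_trichotomy c cstar with hlt | heq | hgt
      · obtain ⟨hl, hu⟩ := comp_bounds hq_pos (hζ c).1 (hζ c).2
          (hζ cstar).1 (hζ cstar).2 hlt φ hφ
        have habs : |c - cstar| = cstar - c := by
          rw [abs_sub_comm]; exact abs_of_pos (by linarith)
        rw [habs, abs_le]; constructor <;> linarith
      · subst heq; simp
      · obtain ⟨hl, hu⟩ := comp_bounds hq_pos (hζ cstar).1 (hζ cstar).2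
          (hζ c).1 (hζ c).2 hgt φ hφ
        have habs : |c - cstar| = c - cstar := abs_of_pos (by linarith)
        rw [habs, abs_le]; constructor <;> linarith
    have hzs : EqOn zstar (ζ cstar) (Icc 0 1) :=
      hζuniq cstar zstar ⟨hzstar.1.1, hzstar.2⟩
    intro φ hφ
    rw [hzs hφ]
    have hb : ∀ c : ℝ, dist (ζ c φ) (ζ cstar φ) ≤ |c - cstar| := by
      intro c; rw [Real.dist_eq]; exact hbnd c φ hφ
    have habs : Tendsto (fun c : ℝ => |c - cstar|) (𝓝 cstar) (𝓝 0) := by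
      simpa using ((tendsto_id.sub_const cstar).abs :
        Tendsto (fun c : ℝ => |c - cstar|) (𝓝 cstar) (𝓝 |cstar - cstar|))
    exact tendsto_iff_dist_tendsto_zero.mpr
      (squeeze_zero (fun c => dist_nonneg) hb habs)
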